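/- Let b ≥ 2 and N ≥ 0 be integers. The multivariable Sierpiński matrix satisfies the recurrence S_{b,N+1}(x_0,…,x_N; r_0,…,r_N) = S_{b,1}(x_N, r_N) ⊗ S_{b,N}(x_0,…,x_{N-1}; r_0,…,r_{N-1}), where ⊗ denotes the Kronecker (tensor) product of matrices and S_{b,1}(x,r) is the b×b lower-triangular matrix with (j,k)-entry B(x; r; j-k) for 0 ≤ k ≤ j ≤ b-1 and 0 otherwise. -/

import Mathlib

open scoped Classical

/-- The `i`-th digit of `m` in base `b`. -/
def dig (b m i : ℕ) : ℕ := m / b ^ i % b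

/-- The generalized binomial coefficient `B(x; r; d) = x(x+r)(x+2r)⋯(x+(d-1)r)/d!`. -/
def genBinom (x r : ℚ) (d : ℕ) : ℚ :=
  (∏ i ∈ Finset.range d, (x + i * r)) / (Nat.factorial d)

/-- The `N`-variable Sierpiński matrix `S_{b,N}(x₀,…,x_{N-1}; r₀,…,r_{N-1})`:
the `b^N × b^N` matrix whose `(j,k)`-entry is `∏_{i<N} B(xᵢ; rᵢ; dᵢ)` when `k ≤ j` and
`k ⪯_b j` (each base-`b` digit of `k` is at most the corresponding digit of `j`),
where `dᵢ` are the base-`b` digits of `j - k`, and `0` otherwise. -/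
noncomputable def Sierp (b N : ℕ) (x r : ℕ → ℚ) : Matrix (Fin (b ^ N)) (Fin (b ^ N)) ℚ :=
  fun j k =>
    if (k : ℕ) ≤ (j : ℕ) ∧ ∀ i, dig b (k : ℕ) i ≤ dig b (j : ℕ) i then
      ∏ i ∈ Finset.range N, genBinom (x i) (r i) (dig b ((j : ℕ) - (k : ℕ)) i)
    else 0

/-- The one-variable `b × b` Sierpiński matrix `S_{b,1}(x, r)`, a lower-triangular
matrix with `(j,k)`-entry `B(x; r; j-k)` for `k ≤ j`, and `0` otherwise. -/
def Sierp1 (b : ℕ) (x r : ℚ) : Matrix (Fin b) (Fin b) ℚ :=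
  fun j k => if (k : ℕ) ≤ (j : ℕ) then genBinom x r ((j : ℕ) - (k : ℕ)) else 0

lemma dig_zero (b m : ℕ) : dig b m 0 = m % b := by simp [dig]

lemma dig_succ (b m i : ℕ) : dig b m (i + 1) = dig b (m / b) i := by
  simp [dig, Nat.div_div_eq_div_mul, pow_succ']

lemma dig_high {b m i : ℕ} (h : m < b ^ i) : dig b m i = 0 := by
  simp [dig, Nat.div_eq_of_lt h]

/-- digitwise domination implies `≤`. -/
lemma le_of_dig_le {b : ℕ} (hb : 2 ≤ b) :
    ∀ k j : ℕ, (∀ i, dig b k i ≤ dig b j i) → k ≤ j := by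
  intro k
  induction k using Nat.strong_induction_on with
  | _ k ih =>
    intro j h
    rcases Nat.eq_zero_or_pos k with hk | hk
    · omega
    · have h0 : k % b ≤ j % b := by simpa [dig_zero] using h 0
      have hdiv : k / b ≤ j / b := by
        refine ih (k / b) (Nat.div_lt_self hk (by omega)) (j / b) fun i => ?_
        simpa [dig_succ] using h (i + 1)
      have hm : b * (k / b) ≤ b * (j / b) := Nat.mul_le_mul_left _ hdiv
      have e1 : b * (k / b) + k % b = k := Nat.div_add_mod k b
      have e2 : b * (j / b) + j % b = j := Nat.div_add_mod j b
      omega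

lemma dig_add_mul_pow_lt {b N a m i : ℕ} (hi : i < N) :
    dig b (a * b ^ N + m) i = dig b m i := by
  rcases Nat.eq_zero_or_pos b with hb | hb
  · subst hb
    have h0 : (0 : ℕ) ^ N = 0 := Nat.zero_pow (by omega)
    simp [dig, h0]
  obtain ⟨c, hc⟩ : b ^ (i + 1) ∣ b ^ N := pow_dvd_pow b hi
  have hbi : 0 < b ^ i := pow_pos hb i
  have h1 : a * b ^ N + m = m + a * c * b * b ^ i := by
    rw [hc, pow_succ]; ring
  rw [h1]
  unfold dig
  rw [Nat.add_mul_div_right _ _ hbi, Nat.add_mul_mod_self_right]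

lemma dig_add_mul_pow_self {b N a m : ℕ} (ha : a < b) (hm : m < b ^ N) :
    dig b (a * b ^ N + m) N = a := by
  have hbN : 0 < b ^ N := lt_of_le_of_lt (Nat.zero_le m) hm
  unfold dig
  rw [show a * b ^ N + m = m + a * b ^ N by ring, Nat.add_mul_div_right _ _ hbN,
    Nat.div_eq_of_lt hm, Nat.zero_add, Nat.mod_eq_of_lt ha]

/-- The Kronecker-product recurrence
`S_{b,N+1}(x₀,…,x_N; r₀,…,r_N) = S_{b,1}(x_N, r_N) ⊗ S_{b,N}(x₀,…,x_{N-1}; r₀,…,r_{N-1})`,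
where the row/column indices of the Kronecker product, `(p, j') : Fin b × Fin (b^N)`,
correspond to `p·b^N + j' : Fin (b^(N+1))`. -/
theorem sierpinski_kronecker_recurrence (b N : ℕ) (hb : 2 ≤ b) (x r : ℕ → ℚ) :
    Sierp b (N + 1) x r =
      Matrix.reindex (finProdFinEquiv.trans (finCongr (pow_succ' b N).symm))
        (finProdFinEquiv.trans (finCongr (pow_succ' b N).symm))
        (Matrix.kroneckerMap (· * ·) (Sierp1 b (x N) (r N)) (Sierp b N x r)) := by
  have hbN : 0 < b ^ N := pow_pos (by omega) N
  funext j k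
  rw [Matrix.reindex_apply, Matrix.submatrix_apply]
  simp only [Equiv.symm_trans_apply, finCongr_symm, finCongr_apply,
    finProdFinEquiv_symm_apply, Matrix.kroneckerMap_apply]
  set J := (j : ℕ) with hJdef
  set K := (k : ℕ) with hKdef
  have hJlt : J < b ^ N * b := by rw [← pow_succ]; exact j.2
  have hKlt : K < b ^ N * b := by rw [← pow_succ]; exact k.2
  -- abbreviations
  set P := J / b ^ N with hP
  set Q := K / b ^ N with hQ
  set Jm := J % b ^ N with hJm
  set Km := K % b ^ N with hKm
  have hPb : P < b := Nat.div_lt_of_lt_mul hJlt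
  have hQb : Q < b := Nat.div_lt_of_lt_mul hKlt
  have hJmlt : Jm < b ^ N := Nat.mod_lt _ hbN
  have hKmlt : Km < b ^ N := Nat.mod_lt _ hbN
  have hJeq : J = P * b ^ N + Jm := by
    rw [hP, hJm, Nat.mul_comm]; exact (Nat.div_add_mod J (b ^ N)).symm
  have hKeq : K = Q * b ^ N + Km := by
    rw [hQ, hKm, Nat.mul_comm]; exact (Nat.div_add_mod K (b ^ N)).symm
  have hJN1 : J < b ^ (N + 1) := by rwa [pow_succ]
  have hKN1 : K < b ^ (N + 1) := by rwa [pow_succ]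
  have dJ : ∀ i, i < N → dig b J i = dig b Jm i := fun i hi => by
    rw [hJeq]; exact dig_add_mul_pow_lt hi
  have dK : ∀ i, i < N → dig b K i = dig b Km i := fun i hi => by
    rw [hKeq]; exact dig_add_mul_pow_lt hi
  have dJN : dig b J N = P := by rw [hJeq]; exact dig_add_mul_pow_self hPb hJmlt
  have dKN : dig b K N = Q := by rw [hKeq]; exact dig_add_mul_pow_self hQb hKmlt
  have dKhigh : ∀ i, N < i → dig b K i = 0 := fun i hi =>
    dig_high (lt_of_lt_of_le hKN1 (Nat.pow_le_pow_right (by omega) hi))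
  have dKmhigh : ∀ i, N ≤ i → dig b Km i = 0 := fun i hi =>
    dig_high (lt_of_lt_of_le hKmlt (Nat.pow_le_pow_right (by omega) hi))
  have dJhigh : ∀ i, N < i → dig b J i = 0 := fun i hi =>
    dig_high (lt_of_lt_of_le hJN1 (Nat.pow_le_pow_right (by omega) hi))
  have key : (K ≤ J ∧ ∀ i, dig b K i ≤ dig b J i) ↔
      (Q ≤ P ∧ (Km ≤ Jm ∧ ∀ i, dig b Km i ≤ dig b Jm i)) := by
    constructor
    · rintro ⟨-, h⟩
      have hdm : ∀ i, dig b Km i ≤ dig b Jm i := by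
        intro i
        rcases lt_or_ge i N with hi | hi
        · rw [← dJ i hi, ← dK i hi]; exact h i
        · rw [dKmhigh i hi]; exact Nat.zero_le _
      refine ⟨?_, le_of_dig_le hb _ _ hdm, hdm⟩
      have := h N
      rwa [dJN, dKN] at this
    · rintro ⟨hQP, _, h⟩
      have hall : ∀ i, dig b K i ≤ dig b J i := by
        intro i
        rcases lt_trichotomy i N with hi | hi | hi
        · rw [dJ i hi, dK i hi]; exact h i
        · subst hi; rwa [dJN, dKN]
        · rw [dKhigh i hi]; exact Nat.zero_le _
      exact ⟨le_of_dig_le hb _ _ hall, hall⟩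
  simp only [Sierp, Sierp1, Fin.coe_divNat, Fin.coe_modNat, Fin.coe_cast,
    ← hJdef, ← hKdef, ← hP, ← hQ, ← hJm, ← hKm]
  clear_value J K P Q Jm Km
  by_cases hcond : K ≤ J ∧ ∀ i, dig b K i ≤ dig b J i
  · obtain ⟨hQP, hKmJm, hdm⟩ := key.mp hcond
    rw [if_pos hcond, if_pos hQP, if_pos ⟨hKmJm, hdm⟩]
    have e1 : P * b ^ N = Q * b ^ N + (P - Q) * b ^ N := by
      rw [← add_mul]; congr 1; omega
    have hsub : J - K = (P - Q) * b ^ N + (Jm - Km) := by omega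
    have digN : dig b (J - K) N = P - Q := by
      rw [hsub]; exact dig_add_mul_pow_self (by omega) (by omega)
    have digs : ∀ i, i < N → dig b (J - K) i = dig b (Jm - Km) i := fun i hi => by
      rw [hsub]; exact dig_add_mul_pow_lt hi
    rw [Finset.prod_range_succ, digN, mul_comm]
    congr 1
    exact Finset.prod_congr rfl fun i hi => by
      rw [digs i (Finset.mem_range.mp hi)]
  · rw [if_neg hcond]
    by_cases hQP : Q ≤ P
    · rw [if_neg fun h => hcond (key.mpr ⟨hQP, h⟩), mul_zero]
    · rw [if_neg hQP, zero_mul]
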